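/- Under the same setting, the maximizer of the sum of the J−K smallest coordinates over {z ≥ 0 : ∑_j g_j(z_j) ≤ G} is unique. (Proof idea: the feasible set is convex, the objective is concave, and strict convexity of the g_j together with the budget binding at any optimum forces uniqueness via a midpoint argument.) -/

import Mathlib

open Finset

/-- Sum of the `J - K` smallest coordinates of `z`: the infimum of sums over
`(J-K)`-element subsets of coordinates. -/
noncomputable def sumSmallest (J K : ℕ) (z : Fin J → ℝ) : ℝ :=
  sInf {s : ℝ | ∃ S : Finset (Fin J), S.card = J - K ∧ s = ∑ i ∈ S, z i}

/-- Feasible stuffing vectors: nonnegative, total cost at most `G`. -/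
def Feasible (J : ℕ) (g : Fin J → ℝ → ℝ) (G : ℝ) : Set (Fin J → ℝ) :=
  {z | (∀ j, 0 ≤ z j) ∧ ∑ j, g j (z j) ≤ G}

lemma sumSmallest_set_finite (J K : ℕ) (z : Fin J → ℝ) :
    {s : ℝ | ∃ S : Finset (Fin J), S.card = J - K ∧ s = ∑ i ∈ S, z i}.Finite := by
  have hsub : {s : ℝ | ∃ S : Finset (Fin J), S.card = J - K ∧ s = ∑ i ∈ S, z i}
      ⊆ (fun S : Finset (Fin J) => ∑ i ∈ S, z i) '' Set.univ := by
    rintro s ⟨S, _, rfl⟩; exact ⟨S, trivial, rfl⟩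
  exact (Set.finite_univ.image _).subset hsub

lemma sumSmallest_exists (J K : ℕ) (z : Fin J → ℝ) :
    ∃ S : Finset (Fin J), S.card = J - K ∧ sumSmallest J K z = ∑ i ∈ S, z i := by
  have hne : {s : ℝ | ∃ S : Finset (Fin J), S.card = J - K ∧ s = ∑ i ∈ S, z i}.Nonempty := by
    obtain ⟨S, -, hc⟩ := Finset.exists_subset_card_eq (s := (Finset.univ : Finset (Fin J))) (n := J - K)
      (by simp [Nat.sub_le])
    exact ⟨_, S, hc, rfl⟩
  obtain ⟨S, hc, hs⟩ := hne.csInf_mem (sumSmallest_set_finite J K z)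
  exact ⟨S, hc, hs⟩

lemma sumSmallest_le (J K : ℕ) (z : Fin J → ℝ) (S : Finset (Fin J)) (hS : S.card = J - K) :
    sumSmallest J K z ≤ ∑ i ∈ S, z i :=
  csInf_le (sumSmallest_set_finite J K z).bddBelow ⟨S, hS, rfl⟩

/-- The maximizer of the sum of the `J-K` smallest coordinates over the
feasible set is unique. -/
theorem stmt1 (J K : ℕ) (g : Fin J → ℝ → ℝ) (G : ℝ)
    (hK : K < J) (hG : 0 < G)
    (hconv : ∀ j, StrictConvexOn ℝ (Set.Ici 0) (g j))
    (hdiff : ∀ j, Differentiable ℝ (g j))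
    (hmono : ∀ j, StrictMonoOn (g j) (Set.Ici (0 : ℝ)))
    (hzero : ∀ j, g j 0 = 0)
    (z₁ z₂ : Fin J → ℝ)
    (hfeas₁ : z₁ ∈ Feasible J g G) (hfeas₂ : z₂ ∈ Feasible J g G)
    (hmax₁ : ∀ w ∈ Feasible J g G, sumSmallest J K w ≤ sumSmallest J K z₁)
    (hmax₂ : ∀ w ∈ Feasible J g G, sumSmallest J K w ≤ sumSmallest J K z₂) :
    z₁ = z₂ := by
  by_contra hne
  obtain ⟨j0, hj0⟩ := Function.ne_iff.mp hne
  set zmid : Fin J → ℝ := fun i => (z₁ i + z₂ i) / 2 with hzmid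
  have hmidnn : ∀ i, 0 ≤ zmid i := fun i => by
    have := hfeas₁.1 i; have := hfeas₂.1 i
    simp only [hzmid]; linarith
  -- values at the two optima agree
  have hM : sumSmallest J K z₁ = sumSmallest J K z₂ :=
    le_antisymm (hmax₂ z₁ hfeas₁) (hmax₁ z₂ hfeas₂)
  set M := sumSmallest J K z₁ with hMdef
  -- midpoint objective is at least M
  have hmid_obj : M ≤ sumSmallest J K zmid := by
    obtain ⟨S, hS, hSval⟩ := sumSmallest_exists J K zmid
    have h1 := sumSmallest_le J K z₁ S hS
    have h2 := sumSmallest_le J K z₂ S hS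
    have hsum : ∑ i ∈ S, zmid i = (∑ i ∈ S, z₁ i + ∑ i ∈ S, z₂ i) / 2 := by
      rw [← Finset.sum_add_distrib, ← Finset.sum_div]
    rw [hSval, hsum]
    rw [← hM] at h2
    linarith
  -- midpoint is strictly inside the budget
  have hstrict : ∑ j, g j (zmid j) < G := by
    have hlt : ∑ j, g j (zmid j) < ∑ j, ((g j (z₁ j) + g j (z₂ j)) / 2) := by
      apply Finset.sum_lt_sum
      · intro i _
        rcases eq_or_ne (z₁ i) (z₂ i) with h | h
        · have : zmid i = z₂ i := by simp only [hzmid, h]; ring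
          rw [this, h]; ring_nf; exact le_of_eq rfl
        · have hc := (hconv i).2 (hfeas₁.1 i) (hfeas₂.1 i) h one_half_pos one_half_pos
            (by norm_num)
          simp only [smul_eq_mul] at hc
          have harg : zmid i = (1:ℝ)/2 * z₁ i + (1:ℝ)/2 * z₂ i := by
            simp only [hzmid]; ring
          rw [harg]; linarith
      · refine ⟨j0, Finset.mem_univ _, ?_⟩
        have hc := (hconv j0).2 (hfeas₁.1 j0) (hfeas₂.1 j0) hj0 one_half_pos one_half_pos
          (by norm_num)
        simp only [smul_eq_mul] at hc
        have harg : zmid j0 = (1:ℝ)/2 * z₁ j0 + (1:ℝ)/2 * z₂ j0 := by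
          simp only [hzmid]; ring
        rw [harg]; linarith
    have h1 := hfeas₁.2
    have h2 := hfeas₂.2
    have : ∑ j, ((g j (z₁ j) + g j (z₂ j)) / 2)
        = (∑ j, g j (z₁ j) + ∑ j, g j (z₂ j)) / 2 := by
      rw [← Finset.sum_add_distrib, ← Finset.sum_div]
    linarith
  -- find ε > 0 keeping feasibility
  set φ : ℝ → ℝ := fun t => ∑ j, g j (zmid j + t) with hφdef
  have hφcont : Continuous φ := by
    apply continuous_finset_sum
    intro i _
    exact (hdiff i).continuous.comp (continuous_const.add continuous_id)
  have hφ0 : φ 0 < G := by simpa [hφdef] using hstrict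
  have hev : ∀ᶠ t in nhds (0 : ℝ), φ t < G :=
    hφcont.continuousAt.eventually_lt_const hφ0
  obtain ⟨ε, hεG, hεpos⟩ :=
    ((hev.filter_mono nhdsWithin_le_nhds).and
      (eventually_mem_nhdsWithin (s := Set.Ioi (0:ℝ)) (a := 0))).exists
  rw [Set.mem_Ioi] at hεpos
  set w : Fin J → ℝ := fun i => zmid i + ε with hwdef
  have hwfeas : w ∈ Feasible J g G := by
    constructor
    · intro i; have := hmidnn i; simp only [hwdef]; linarith
    · exact le_of_lt hεG
  -- w's objective exceeds M
  have hwval : sumSmallest J K zmid + (J - K : ℕ) * ε ≤ sumSmallest J K w := by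
    obtain ⟨S, hS, hSval⟩ := sumSmallest_exists J K w
    have h1 := sumSmallest_le J K zmid S hS
    have hsum : ∑ i ∈ S, w i = ∑ i ∈ S, zmid i + (J - K : ℕ) * ε := by
      simp only [hwdef, Finset.sum_add_distrib, Finset.sum_const, hS, nsmul_eq_mul]
    rw [hSval, hsum]
    linarith
  have hJK : (1 : ℝ) ≤ (J - K : ℕ) := by
    have : 1 ≤ J - K := Nat.le_sub_of_add_le (by omega)
    exact_mod_cast this
  have hfinal := hmax₁ w hwfeas
  nlinarith [mul_pos hεpos (lt_of_lt_of_le one_pos hJK)]
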